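/- Let V be a finite-dimensional ℚ(v,t)-vector space, V_ℤ a ℤ[v^{±1},t^{±1}]-lattice, L₀ a free A-lattice (A = functions regular at v=0) and L_∞ a free Ā-lattice (Ā = functions regular at v=∞), each spanning V over ℚ(v,t). If the natural map E := V_ℤ ∩ L₀ ∩ L_∞ → (V_ℤ ∩ L₀)/(V_ℤ ∩ vL₀) is an isomorphism of ℤ[t^{±1}]-modules, then V_ℤ ∩ L₀ ≅ ℤ[v,t^{±1}] ⊗_{ℤ[t^{±1}]} E, V_ℤ ∩ L_∞ ≅ ℤ[v^{-1},t^{±1}] ⊗_{ℤ[t^{±1}]} E, V_ℤ ≅ ℤ[v^{±1},t^{±1}] ⊗_{ℤ[t^{±1}]} E, and E → (V_ℤ ∩ L_∞)/(V_ℤ ∩ v^{-1}L_∞) is also an isomorphism. -/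

import Mathlib

/- STATEMENT 19 (triangularity lemma): V a finite-dimensional ℚ(v,t)-vector space, V_ℤ a
ℤ[v^{±1},t^{±1}]-lattice, L₀ a free A-lattice (A = functions regular at v=0), L_∞ a free
Ā-lattice (Ā = functions regular at v=∞), each spanning V. If
E := V_ℤ ∩ L₀ ∩ L_∞ → (V_ℤ ∩ L₀)/(V_ℤ ∩ vL₀) is an isomorphism of ℤ[t^{±1}]-modules then
V_ℤ ∩ L₀ ≅ ℤ[v,t^{±1}] ⊗_{ℤ[t^{±1}]} E, V_ℤ ∩ L_∞ ≅ ℤ[v^{-1},t^{±1}] ⊗_{ℤ[t^{±1}]} E,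
V_ℤ ≅ ℤ[v^{±1},t^{±1}] ⊗_{ℤ[t^{±1}]} E, and E → (V_ℤ ∩ L_∞)/(V_ℤ ∩ v^{-1}L_∞) is also an
isomorphism.  The tensor isomorphisms are expressed by exhibiting a common
ℚ(v,t)-linearly independent set S with E, V_ℤ∩L₀, V_ℤ∩L_∞, V_ℤ the spans of S over the
respective coefficient rings. -/

noncomputable section

/-- The field ℚ(t). -/
abbrev FF : Type := RatFunc ℚ
/-- The field ℚ(v,t) = ℚ(t)(v). -/
abbrev KK : Type := RatFunc FF
/-- The variable v. -/
def vv : KK := RatFunc.X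
/-- The variable t. -/
def tt : KK := algebraMap FF KK RatFunc.X

/-- A ⊂ ℚ(v,t): rational functions without pole at v = 0. -/
def Aset : Set KK := {x | ∃ p q : Polynomial FF, Polynomial.eval 0 q ≠ 0 ∧
  x * algebraMap (Polynomial FF) KK q = algebraMap (Polynomial FF) KK p}
/-- Ā ⊂ ℚ(v,t): rational functions without pole at v = ∞. -/
def Abarset : Set KK := {x | ∃ p q : Polynomial FF, q ≠ 0 ∧ p.degree ≤ q.degree ∧
  x * algebraMap (Polynomial FF) KK q = algebraMap (Polynomial FF) KK p}
/-- ℤ[t^{±1}]. -/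
def Tset : Set KK := (Algebra.adjoin ℤ ({tt, tt⁻¹} : Set KK) : Subalgebra ℤ KK)
/-- ℤ[v, t^{±1}]. -/
def Rv : Set KK := (Algebra.adjoin ℤ ({vv, tt, tt⁻¹} : Set KK) : Subalgebra ℤ KK)
/-- ℤ[v^{-1}, t^{±1}]. -/
def Rvinv : Set KK := (Algebra.adjoin ℤ ({vv⁻¹, tt, tt⁻¹} : Set KK) : Subalgebra ℤ KK)
/-- ℤ[v^{±1}, t^{±1}]. -/
def Rlaurent : Set KK := (Algebra.adjoin ℤ ({vv, vv⁻¹, tt, tt⁻¹} : Set KK) : Subalgebra ℤ KK)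

variable {V : Type*} [AddCommGroup V] [Module KK V]

/-- The span of S over a coefficient subring R ⊂ ℚ(v,t), as a subset of V. -/
def rspan (R : Set KK) (S : Set V) : Set V :=
  AddSubgroup.closure {x | ∃ c ∈ R, ∃ s ∈ S, x = c • s}

namespace Triang

open Polynomial

lemma vv_eq : vv = algebraMap (Polynomial FF) KK Polynomial.X := (RatFunc.algebraMap_X).symm

lemma vv_ne_zero : vv ≠ 0 := RatFunc.X_ne_zero

lemma zero_mem_A : (0:KK) ∈ Aset := ⟨0, 1, by simp, by simp⟩

lemma one_mem_A : (1:KK) ∈ Aset := ⟨1, 1, by simp, by simp⟩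

lemma add_mem_A {a b : KK} (ha : a ∈ Aset) (hb : b ∈ Aset) : a + b ∈ Aset := by
  obtain ⟨p, q, hq, hpq⟩ := ha
  obtain ⟨p', q', hq', hpq'⟩ := hb
  refine ⟨p * q' + p' * q, q * q', by simp [hq, hq'], ?_⟩
  rw [map_mul, map_add, map_mul, map_mul]
  calc (a + b) * (algebraMap (Polynomial FF) KK q * algebraMap (Polynomial FF) KK q')
      = (a * algebraMap (Polynomial FF) KK q) * algebraMap (Polynomial FF) KK q'
        + (b * algebraMap (Polynomial FF) KK q') * algebraMap (Polynomial FF) KK q := by ring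
    _ = _ := by rw [hpq, hpq']

lemma neg_mem_A {a : KK} (ha : a ∈ Aset) : -a ∈ Aset := by
  obtain ⟨p, q, hq, hpq⟩ := ha
  exact ⟨-p, q, hq, by rw [map_neg, ← hpq]; ring⟩

lemma mul_mem_A {a b : KK} (ha : a ∈ Aset) (hb : b ∈ Aset) : a * b ∈ Aset := by
  obtain ⟨p, q, hq, hpq⟩ := ha
  obtain ⟨p', q', hq', hpq'⟩ := hb
  refine ⟨p * p', q * q', by simp [hq, hq'], ?_⟩
  rw [map_mul, map_mul]
  calc a * b * (algebraMap (Polynomial FF) KK q * algebraMap (Polynomial FF) KK q')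
      = (a * algebraMap (Polynomial FF) KK q) * (b * algebraMap (Polynomial FF) KK q') := by ring
    _ = _ := by rw [hpq, hpq']

lemma intCast_mem_A (n : ℤ) : ((n : KK)) ∈ Aset :=
  ⟨(n : Polynomial FF), 1, by simp, by push_cast; simp⟩

def Asub : Subalgebra ℤ KK where
  carrier := Aset
  mul_mem' := mul_mem_A
  one_mem' := one_mem_A
  add_mem' := add_mem_A
  zero_mem' := zero_mem_A
  algebraMap_mem' := fun n => by simpa using intCast_mem_A n

lemma zero_mem_Ab : (0:KK) ∈ Abarset := ⟨0, 1, one_ne_zero, by simp, by simp⟩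

lemma one_mem_Ab : (1:KK) ∈ Abarset := ⟨1, 1, one_ne_zero, le_refl _, by simp⟩

lemma add_mem_Ab {a b : KK} (ha : a ∈ Abarset) (hb : b ∈ Abarset) : a + b ∈ Abarset := by
  obtain ⟨p, q, hq, hd, hpq⟩ := ha
  obtain ⟨p', q', hq', hd', hpq'⟩ := hb
  refine ⟨p * q' + p' * q, q * q', mul_ne_zero hq hq', ?_, ?_⟩
  · refine le_trans (Polynomial.degree_add_le _ _) ?_
    rw [Polynomial.degree_mul, Polynomial.degree_mul, Polynomial.degree_mul]
    exact max_le (add_le_add_left hd _) (by rw [add_comm (degree q) (degree q')]; exact add_le_add_left hd' _)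
  · rw [map_mul, map_add, map_mul, map_mul]
    calc (a + b) * (algebraMap (Polynomial FF) KK q * algebraMap (Polynomial FF) KK q')
        = (a * algebraMap (Polynomial FF) KK q) * algebraMap (Polynomial FF) KK q'
          + (b * algebraMap (Polynomial FF) KK q') * algebraMap (Polynomial FF) KK q := by ring
      _ = _ := by rw [hpq, hpq']

lemma neg_mem_Ab {a : KK} (ha : a ∈ Abarset) : -a ∈ Abarset := by
  obtain ⟨p, q, hq, hd, hpq⟩ := ha
  exact ⟨-p, q, hq, by simpa using hd, by rw [map_neg, ← hpq]; ring⟩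

lemma mul_mem_Ab {a b : KK} (ha : a ∈ Abarset) (hb : b ∈ Abarset) : a * b ∈ Abarset := by
  obtain ⟨p, q, hq, hd, hpq⟩ := ha
  obtain ⟨p', q', hq', hd', hpq'⟩ := hb
  refine ⟨p * p', q * q', mul_ne_zero hq hq', ?_, ?_⟩
  · rw [Polynomial.degree_mul, Polynomial.degree_mul]
    exact add_le_add hd hd'
  · rw [map_mul, map_mul]
    calc a * b * (algebraMap (Polynomial FF) KK q * algebraMap (Polynomial FF) KK q')
        = (a * algebraMap (Polynomial FF) KK q) * (b * algebraMap (Polynomial FF) KK q') := by ring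
      _ = _ := by rw [hpq, hpq']

lemma intCast_mem_Ab (n : ℤ) : ((n : KK)) ∈ Abarset := by
  refine ⟨(n : Polynomial FF), 1, one_ne_zero, ?_, by push_cast; simp⟩
  rw [Polynomial.degree_one]
  exact le_trans (Polynomial.degree_intCast_le n) (le_refl _)

def Absub : Subalgebra ℤ KK where
  carrier := Abarset
  mul_mem' := mul_mem_Ab
  one_mem' := one_mem_Ab
  add_mem' := add_mem_Ab
  zero_mem' := zero_mem_Ab
  algebraMap_mem' := fun n => by simpa using intCast_mem_Ab n


lemma mem_A_of_Asub {x : KK} (h : x ∈ Asub) : x ∈ Aset := h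
lemma mem_Ab_of_Absub {x : KK} (h : x ∈ Absub) : x ∈ Abarset := h

lemma vv_mem_A : vv ∈ Aset :=
  ⟨Polynomial.X, 1, by simp, by rw [map_one, mul_one, vv_eq]⟩

lemma FF_mem_A (f : FF) : algebraMap FF KK f ∈ Aset := by
  refine ⟨Polynomial.C f, 1, by simp, ?_⟩
  rw [map_one, mul_one, RatFunc.algebraMap_C, ← RatFunc.algebraMap_eq_C]

lemma FF_mem_Ab (f : FF) : algebraMap FF KK f ∈ Abarset := by
  refine ⟨Polynomial.C f, 1, one_ne_zero, ?_, ?_⟩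
  · rw [Polynomial.degree_one]; exact Polynomial.degree_C_le
  · rw [map_one, mul_one, RatFunc.algebraMap_C, ← RatFunc.algebraMap_eq_C]

lemma tt_mem_A : tt ∈ Aset := FF_mem_A _
lemma ttinv_mem_A : tt⁻¹ ∈ Aset := by
  rw [tt, ← map_inv₀]; exact FF_mem_A _
lemma tt_mem_Ab : tt ∈ Abarset := FF_mem_Ab _
lemma ttinv_mem_Ab : tt⁻¹ ∈ Abarset := by
  rw [tt, ← map_inv₀]; exact FF_mem_Ab _

lemma vvinv_mem_Ab : vv⁻¹ ∈ Abarset := by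
  refine ⟨1, Polynomial.X, Polynomial.X_ne_zero, ?_, ?_⟩
  · rw [Polynomial.degree_one, Polynomial.degree_X]; exact zero_le_one
  · rw [← vv_eq, map_one, inv_mul_cancel₀ vv_ne_zero]

-- inclusions of the adjoin subalgebras
lemma T_sub_A : Tset ⊆ Aset := by
  intro x hx
  have : Algebra.adjoin ℤ ({tt, tt⁻¹} : Set KK) ≤ Asub := by
    apply Algebra.adjoin_le
    rintro y (rfl | rfl)
    · exact tt_mem_A
    · exact ttinv_mem_A
  exact this hx

lemma T_sub_Ab : Tset ⊆ Abarset := by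
  intro x hx
  have : Algebra.adjoin ℤ ({tt, tt⁻¹} : Set KK) ≤ Absub := by
    apply Algebra.adjoin_le
    rintro y (rfl | rfl)
    · exact tt_mem_Ab
    · exact ttinv_mem_Ab
  exact this hx

lemma Rv_sub_A : Rv ⊆ Aset := by
  intro x hx
  have : Algebra.adjoin ℤ ({vv, tt, tt⁻¹} : Set KK) ≤ Asub := by
    apply Algebra.adjoin_le
    rintro y (rfl | rfl | rfl)
    · exact vv_mem_A
    · exact tt_mem_A
    · exact ttinv_mem_A
  exact this hx

lemma Rvinv_sub_Ab : Rvinv ⊆ Abarset := by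
  intro x hx
  have : Algebra.adjoin ℤ ({vv⁻¹, tt, tt⁻¹} : Set KK) ≤ Absub := by
    apply Algebra.adjoin_le
    rintro y (rfl | rfl | rfl)
    · exact vvinv_mem_Ab
    · exact tt_mem_Ab
    · exact ttinv_mem_Ab
  exact this hx

lemma T_sub_Rv : Tset ⊆ Rv := fun x hx =>
  Algebra.adjoin_mono (by intro y hy; simp only [Set.mem_insert_iff, Set.mem_singleton_iff] at hy ⊢; tauto) hx

lemma T_sub_Rvinv : Tset ⊆ Rvinv := fun x hx =>
  Algebra.adjoin_mono (by intro y hy; simp only [Set.mem_insert_iff, Set.mem_singleton_iff] at hy ⊢; tauto) hx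

lemma T_sub_Rl : Tset ⊆ Rlaurent := fun x hx =>
  Algebra.adjoin_mono (by intro y hy; simp only [Set.mem_insert_iff, Set.mem_singleton_iff] at hy ⊢; tauto) hx

lemma Rv_sub_Rl : Rv ⊆ Rlaurent := fun x hx =>
  Algebra.adjoin_mono (by intro y hy; simp only [Set.mem_insert_iff, Set.mem_singleton_iff] at hy ⊢; tauto) hx

lemma Rvinv_sub_Rl : Rvinv ⊆ Rlaurent := fun x hx =>
  Algebra.adjoin_mono (by intro y hy; simp only [Set.mem_insert_iff, Set.mem_singleton_iff] at hy ⊢; tauto) hx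

-- membership closure props for the adjoin sets
lemma vv_mem_Rv : vv ∈ Rv := Algebra.subset_adjoin (by simp)
lemma vv_mem_Rl : vv ∈ Rlaurent := Algebra.subset_adjoin (by simp)
lemma vvinv_mem_Rvinv : vv⁻¹ ∈ Rvinv := Algebra.subset_adjoin (by simp)
lemma vvinv_mem_Rl : vv⁻¹ ∈ Rlaurent := Algebra.subset_adjoin (by simp)
lemma tt_mem_T : tt ∈ Tset := Algebra.subset_adjoin (by simp)
lemma ttinv_mem_T : tt⁻¹ ∈ Tset := Algebra.subset_adjoin (by simp)

lemma one_mem_T : (1:KK) ∈ Tset := Subalgebra.one_mem _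
lemma one_mem_Rv : (1:KK) ∈ Rv := Subalgebra.one_mem _
lemma one_mem_Rvinv : (1:KK) ∈ Rvinv := Subalgebra.one_mem _
lemma one_mem_Rl : (1:KK) ∈ Rlaurent := Subalgebra.one_mem _

lemma mul_mem_T {a b : KK} (ha : a ∈ Tset) (hb : b ∈ Tset) : a * b ∈ Tset :=
  Subalgebra.mul_mem _ ha hb
lemma mul_mem_Rv {a b : KK} (ha : a ∈ Rv) (hb : b ∈ Rv) : a * b ∈ Rv :=
  Subalgebra.mul_mem _ ha hb
lemma mul_mem_Rvinv {a b : KK} (ha : a ∈ Rvinv) (hb : b ∈ Rvinv) : a * b ∈ Rvinv :=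
  Subalgebra.mul_mem _ ha hb
lemma mul_mem_Rl {a b : KK} (ha : a ∈ Rlaurent) (hb : b ∈ Rlaurent) : a * b ∈ Rlaurent :=
  Subalgebra.mul_mem _ ha hb

lemma pow_mem_Rv (k : ℕ) : vv ^ k ∈ Rv := Subalgebra.pow_mem _ vv_mem_Rv k
lemma pow_mem_Rl (k : ℕ) : vv ^ k ∈ Rlaurent := Subalgebra.pow_mem _ vv_mem_Rl k
lemma powinv_mem_Rvinv (k : ℕ) : (vv⁻¹) ^ k ∈ Rvinv := Subalgebra.pow_mem _ vvinv_mem_Rvinv k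
lemma powinv_mem_Rl (k : ℕ) : (vv⁻¹) ^ k ∈ Rlaurent := Subalgebra.pow_mem _ vvinv_mem_Rl k
lemma pow_mem_A (k : ℕ) : vv ^ k ∈ Aset := Rv_sub_A (pow_mem_Rv k)
lemma powinv_mem_Ab (k : ℕ) : (vv⁻¹) ^ k ∈ Abarset := Rvinv_sub_Ab (powinv_mem_Rvinv k)

lemma vv_mul_vvinv : vv * vv⁻¹ = 1 := mul_inv_cancel₀ vv_ne_zero

-- Λ1 : every Laurent element becomes polynomial after multiplying by a power of v
lemma Lam1 {c : KK} (hc : c ∈ Rlaurent) : ∃ k : ℕ, vv ^ k * c ∈ Rv := by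
  induction hc using Algebra.adjoin_induction with
  | mem x hx =>
    rcases hx with rfl | rfl | rfl | rfl
    · exact ⟨0, by rw [pow_zero, one_mul]; exact vv_mem_Rv⟩
    · exact ⟨1, by rw [pow_one, vv_mul_vvinv]; exact one_mem_Rv⟩
    · exact ⟨0, by rw [pow_zero, one_mul]; exact T_sub_Rv tt_mem_T⟩
    · exact ⟨0, by rw [pow_zero, one_mul]; exact T_sub_Rv ttinv_mem_T⟩
  | algebraMap r =>
    exact ⟨0, by rw [pow_zero, one_mul]; exact Subalgebra.algebraMap_mem _ r⟩
  | add x y hx hy ihx ihy =>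
    obtain ⟨k, hk⟩ := ihx
    obtain ⟨l, hl⟩ := ihy
    refine ⟨k + l, ?_⟩
    have : vv ^ (k + l) * (x + y) = vv ^ l * (vv ^ k * x) + vv ^ k * (vv ^ l * y) := by ring
    rw [this]
    exact Subalgebra.add_mem _ (mul_mem_Rv (pow_mem_Rv l) hk) (mul_mem_Rv (pow_mem_Rv k) hl)
  | mul x y hx hy ihx ihy =>
    obtain ⟨k, hk⟩ := ihx
    obtain ⟨l, hl⟩ := ihy
    refine ⟨k + l, ?_⟩
    have : vv ^ (k + l) * (x * y) = (vv ^ k * x) * (vv ^ l * y) := by ring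
    rw [this]
    exact mul_mem_Rv hk hl

lemma Lam2 {c : KK} (hc : c ∈ Rlaurent) : ∃ k : ℕ, (vv⁻¹) ^ k * c ∈ Rvinv := by
  induction hc using Algebra.adjoin_induction with
  | mem x hx =>
    rcases hx with rfl | rfl | rfl | rfl
    · exact ⟨1, by rw [pow_one, mul_comm, vv_mul_vvinv]; exact one_mem_Rvinv⟩
    · exact ⟨0, by rw [pow_zero, one_mul]; exact vvinv_mem_Rvinv⟩
    · exact ⟨0, by rw [pow_zero, one_mul]; exact T_sub_Rvinv tt_mem_T⟩
    · exact ⟨0, by rw [pow_zero, one_mul]; exact T_sub_Rvinv ttinv_mem_T⟩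
  | algebraMap r =>
    exact ⟨0, by rw [pow_zero, one_mul]; exact Subalgebra.algebraMap_mem _ r⟩
  | add x y hx hy ihx ihy =>
    obtain ⟨k, hk⟩ := ihx
    obtain ⟨l, hl⟩ := ihy
    refine ⟨k + l, ?_⟩
    have : (vv⁻¹) ^ (k + l) * (x + y)
        = (vv⁻¹) ^ l * ((vv⁻¹) ^ k * x) + (vv⁻¹) ^ k * ((vv⁻¹) ^ l * y) := by ring
    rw [this]
    exact Subalgebra.add_mem _ (mul_mem_Rvinv (powinv_mem_Rvinv l) hk)
      (mul_mem_Rvinv (powinv_mem_Rvinv k) hl)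
  | mul x y hx hy ihx ihy =>
    obtain ⟨k, hk⟩ := ihx
    obtain ⟨l, hl⟩ := ihy
    refine ⟨k + l, ?_⟩
    have : (vv⁻¹) ^ (k + l) * (x * y) = ((vv⁻¹) ^ k * x) * ((vv⁻¹) ^ l * y) := by ring
    rw [this]
    exact mul_mem_Rvinv hk hl

-- Λ4 : congruence modulo (v-1)·Λ
lemma Lam4 {c : KK} (hc : c ∈ Rlaurent) :
    ∃ γ ∈ Tset, ∃ d ∈ Rlaurent, c - γ = (vv - 1) * d := by
  induction hc using Algebra.adjoin_induction with
  | mem x hx =>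
    rcases hx with rfl | rfl | rfl | rfl
    · exact ⟨1, one_mem_T, 1, one_mem_Rl, by ring⟩
    · refine ⟨1, one_mem_T, -vv⁻¹, Subalgebra.neg_mem _ vvinv_mem_Rl, ?_⟩
      have : (vv - 1) * -vv⁻¹ = -(vv * vv⁻¹) + vv⁻¹ := by ring
      rw [this, vv_mul_vvinv]; ring
    · exact ⟨tt, tt_mem_T, 0, Subalgebra.zero_mem _, by ring⟩
    · exact ⟨tt⁻¹, ttinv_mem_T, 0, Subalgebra.zero_mem _, by ring⟩
  | algebraMap r =>
    exact ⟨algebraMap ℤ KK r, Subalgebra.algebraMap_mem _ r, 0, Subalgebra.zero_mem _, by ring⟩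
  | add x y hx hy ihx ihy =>
    obtain ⟨γ, hγ, d, hd, hxd⟩ := ihx
    obtain ⟨γ', hγ', d', hd', hyd⟩ := ihy
    refine ⟨γ + γ', Subalgebra.add_mem _ hγ hγ', d + d', Subalgebra.add_mem _ hd hd', ?_⟩
    have : x + y - (γ + γ') = (x - γ) + (y - γ') := by ring
    rw [this, hxd, hyd]; ring
  | mul x y hx hy ihx ihy =>
    obtain ⟨γ, hγ, d, hd, hxd⟩ := ihx
    obtain ⟨γ', hγ', d', hd', hyd⟩ := ihy
    refine ⟨γ * γ', mul_mem_T hγ hγ', x * d' + γ' * d,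
      Subalgebra.add_mem _ (mul_mem_Rl hx hd') (mul_mem_Rl (T_sub_Rl hγ') hd), ?_⟩
    have : x * y - γ * γ' = x * (y - γ') + γ' * (x - γ) := by ring
    rw [this, hxd, hyd]; ring

-- factor out powers of X from a polynomial
lemma poly_factor : ∀ n : ℕ, ∀ q : Polynomial FF, q ≠ 0 → q.natDegree ≤ n →
    ∃ (m : ℕ) (q' : Polynomial FF), q = Polynomial.X ^ m * q' ∧ q'.eval 0 ≠ 0 := by
  intro n
  induction n with
  | zero =>
    intro q hq hdeg
    refine ⟨0, q, by rw [pow_zero, one_mul], ?_⟩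
    have : q.natDegree = 0 := Nat.le_zero.mp hdeg
    rw [Polynomial.eq_C_of_natDegree_eq_zero this]
    simpa [Polynomial.eval_C] using fun h => hq (by rw [Polynomial.eq_C_of_natDegree_eq_zero this, h, map_zero])
  | succ n ih =>
    intro q hq hdeg
    by_cases h0 : q.eval 0 ≠ 0
    · exact ⟨0, q, by rw [pow_zero, one_mul], h0⟩
    · push_neg at h0
      have hdvd : Polynomial.X ∣ q := Polynomial.X_dvd_iff.mpr (by rwa [Polynomial.coeff_zero_eq_eval_zero])
      obtain ⟨q₂, rfl⟩ := hdvd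
      have hq₂ : q₂ ≠ 0 := fun h => hq (by rw [h, mul_zero])
      have hdeg₂ : q₂.natDegree ≤ n := by
        have : (Polynomial.X * q₂).natDegree = 1 + q₂.natDegree := by
          rw [Polynomial.natDegree_mul Polynomial.X_ne_zero hq₂, Polynomial.natDegree_X]
        omega
      obtain ⟨m, q', hfac, hval⟩ := ih q₂ hq₂ hdeg₂
      exact ⟨m + 1, q', by rw [hfac]; ring, hval⟩

-- K1 : clearing poles at v = 0
lemma K1 (a : KK) : ∃ k : ℕ, vv ^ k * a ∈ Aset := by
  rcases eq_or_ne a 0 with rfl | ha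
  · exact ⟨0, by rw [mul_zero]; exact zero_mem_A⟩
  · have hden : a * algebraMap (Polynomial FF) KK a.denom = algebraMap (Polynomial FF) KK a.num := by
      exact ((div_eq_iff (RatFunc.algebraMap_ne_zero (RatFunc.denom_ne_zero a))).mp
        (RatFunc.num_div_denom a)).symm
    obtain ⟨m, q', hfac, hval⟩ := poly_factor a.denom.natDegree a.denom (RatFunc.denom_ne_zero a) le_rfl
    refine ⟨m, a.num, q', hval, ?_⟩
    have : vv ^ m * algebraMap (Polynomial FF) KK q'
        = algebraMap (Polynomial FF) KK a.denom := by
      rw [hfac, map_mul, map_pow, ← vv_eq]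
    calc vv ^ m * a * algebraMap (Polynomial FF) KK q'
        = a * (vv ^ m * algebraMap (Polynomial FF) KK q') := by ring
      _ = a * algebraMap (Polynomial FF) KK a.denom := by rw [this]
      _ = _ := hden

-- K2 : clearing poles at v = ∞
lemma K2 (a : KK) : ∃ k : ℕ, (vv⁻¹) ^ k * a ∈ Abarset := by
  rcases eq_or_ne a 0 with rfl | ha
  · exact ⟨0, by rw [mul_zero]; exact zero_mem_Ab⟩
  · have hden : a * algebraMap (Polynomial FF) KK a.denom = algebraMap (Polynomial FF) KK a.num := by
      exact ((div_eq_iff (RatFunc.algebraMap_ne_zero (RatFunc.denom_ne_zero a))).mp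
        (RatFunc.num_div_denom a)).symm
    refine ⟨a.num.natDegree, a.num, Polynomial.X ^ a.num.natDegree * a.denom,
      mul_ne_zero (pow_ne_zero _ Polynomial.X_ne_zero) (RatFunc.denom_ne_zero a), ?_, ?_⟩
    · rw [Polynomial.degree_mul, Polynomial.degree_pow, Polynomial.degree_X]
      have h1 : a.num.degree ≤ (a.num.natDegree : WithBot ℕ) := Polynomial.degree_le_natDegree
      have h2 : (0 : WithBot ℕ) ≤ a.denom.degree :=
        Polynomial.zero_le_degree_iff.mpr (RatFunc.denom_ne_zero a)
      calc a.num.degree ≤ (a.num.natDegree : WithBot ℕ) := h1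
        _ = (a.num.natDegree : WithBot ℕ) • 1 + 0 := by simp
        _ ≤ (a.num.natDegree : WithBot ℕ) • 1 + a.denom.degree := by
            exact add_le_add_right h2 _
    · rw [map_mul, map_pow, ← vv_eq]
      calc (vv⁻¹) ^ a.num.natDegree * a * (vv ^ a.num.natDegree * algebraMap (Polynomial FF) KK a.denom)
          = ((vv⁻¹) ^ a.num.natDegree * vv ^ a.num.natDegree) * (a * algebraMap (Polynomial FF) KK a.denom) := by ring
        _ = _ := by
            rw [← mul_pow, inv_mul_cancel₀ vv_ne_zero, one_pow, one_mul, hden]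


end Triang

namespace Triang

lemma mem_rspan_iff {R : Set KK} {S : Set V} {x : V} :
    x ∈ rspan R S ↔ x ∈ AddSubgroup.closure {y | ∃ c ∈ R, ∃ s ∈ S, y = c • s} := Iff.rfl

lemma rspan_zero (R : Set KK) (S : Set V) : (0 : V) ∈ rspan R S :=
  AddSubgroup.zero_mem _

lemma rspan_add {R : Set KK} {S : Set V} {x y : V} (hx : x ∈ rspan R S) (hy : y ∈ rspan R S) :
    x + y ∈ rspan R S :=
  AddSubgroup.add_mem _ hx hy

lemma rspan_neg {R : Set KK} {S : Set V} {x : V} (hx : x ∈ rspan R S) : -x ∈ rspan R S :=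
  AddSubgroup.neg_mem _ hx

lemma rspan_sub {R : Set KK} {S : Set V} {x y : V} (hx : x ∈ rspan R S) (hy : y ∈ rspan R S) :
    x - y ∈ rspan R S :=
  AddSubgroup.sub_mem _ hx hy

lemma rspan_sum {R : Set KK} {S : Set V} {ι : Type*} (s : Finset ι) (f : ι → V)
    (h : ∀ i ∈ s, f i ∈ rspan R S) : (∑ i ∈ s, f i) ∈ rspan R S :=
  AddSubgroup.sum_mem _ h

lemma rspan_gen {R : Set KK} {S : Set V} {c : KK} {s : V} (hc : c ∈ R) (hs : s ∈ S) :
    c • s ∈ rspan R S :=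
  AddSubgroup.subset_closure ⟨c, hc, s, hs, rfl⟩

lemma rspan_induction {R : Set KK} {S : Set V} {T : Set V}
    (h0 : (0 : V) ∈ T) (hadd : ∀ a ∈ T, ∀ b ∈ T, a + b ∈ T) (hneg : ∀ a ∈ T, -a ∈ T)
    (hgen : ∀ c ∈ R, ∀ s ∈ S, c • s ∈ T) : rspan R S ⊆ T := by
  intro x hx
  rw [mem_rspan_iff] at hx
  induction hx using AddSubgroup.closure_induction with
  | mem y hy => obtain ⟨c, hc, s, hs, rfl⟩ := hy; exact hgen c hc s hs
  | zero => exact h0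
  | add a b _ _ ha hb => exact hadd a ha b hb
  | neg a _ ha => exact hneg a ha

lemma rspan_smul {R R' : Set KK} {S : Set V} (c : KK) (h : ∀ r ∈ R, c * r ∈ R') :
    ∀ x ∈ rspan R S, c • x ∈ rspan R' S := by
  intro x hx
  refine rspan_induction (T := {y | c • y ∈ rspan R' S}) ?_ ?_ ?_ ?_ hx
  · simp only [Set.mem_setOf_eq, smul_zero]; exact rspan_zero _ _
  · intro a ha b hb
    simp only [Set.mem_setOf_eq, smul_add] at ha hb ⊢
    exact rspan_add ha hb
  · intro a ha
    simp only [Set.mem_setOf_eq, smul_neg] at ha ⊢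
    exact rspan_neg ha
  · intro r hr s hs
    simp only [Set.mem_setOf_eq, smul_smul]
    exact rspan_gen (h r hr) hs

lemma rspan_mono_ring {R R' : Set KK} {S : Set V} (h : R ⊆ R') : rspan R S ⊆ rspan R' S := by
  intro x hx
  have := rspan_smul (R := R) (R' := R') (S := S) 1 (fun r hr => by rw [one_mul]; exact h hr) x hx
  rwa [one_smul] at this

lemma subset_rspan {R : Set KK} {S : Set V} (h1 : (1:KK) ∈ R) : S ⊆ rspan R S := by
  intro s hs
  have := rspan_gen h1 hs
  rwa [one_smul] at this


lemma cancel0 (k : ℕ) : (vv⁻¹) ^ k * vv ^ k = 1 := by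
  rw [← mul_pow, inv_mul_cancel₀ vv_ne_zero, one_pow]

lemma cancel0' (k : ℕ) : vv ^ k * (vv⁻¹) ^ k = 1 := by
  rw [← mul_pow, mul_inv_cancel₀ vv_ne_zero, one_pow]

lemma cancel1 {i k : ℕ} (h : i ≤ k) : (vv⁻¹) ^ k * vv ^ i = (vv⁻¹) ^ (k - i) := by
  have hsplit : (vv⁻¹) ^ k = (vv⁻¹) ^ (k - i) * (vv⁻¹) ^ i := by
    rw [← pow_add]; congr 1; omega
  rw [hsplit, mul_assoc, cancel0 i, mul_one]

lemma cancel2 {i k : ℕ} (h : i ≤ k) : vv ^ k * (vv⁻¹) ^ i = vv ^ (k - i) := by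
  have hsplit : vv ^ k = vv ^ (k - i) * vv ^ i := by
    rw [← pow_add]; congr 1; omega
  rw [hsplit, mul_assoc, cancel0' i, mul_one]

end Triang

set_option maxHeartbeats 2000000 in
theorem triangularity_lemma [FiniteDimensional KK V]
    -- the three lattices, each generated (freely, over its coefficient ring) by a
    -- ℚ(v,t)-basis of V
    (Vz L0 Linf : Set V)
    (hVz : ∃ S : Finset V, LinearIndependent KK (fun x : (S : Set V) => (x : V)) ∧
      Submodule.span KK (S : Set V) = ⊤ ∧ Vz = rspan Rlaurent (S : Set V))
    (hL0 : ∃ S : Finset V, LinearIndependent KK (fun x : (S : Set V) => (x : V)) ∧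
      Submodule.span KK (S : Set V) = ⊤ ∧ L0 = rspan Aset (S : Set V))
    (hLinf : ∃ S : Finset V, LinearIndependent KK (fun x : (S : Set V) => (x : V)) ∧
      Submodule.span KK (S : Set V) = ⊤ ∧ Linf = rspan Abarset (S : Set V))
    -- hypothesis: E = V_ℤ ∩ L₀ ∩ L_∞ → (V_ℤ ∩ L₀)/(V_ℤ ∩ vL₀) is an isomorphism
    (hsurj : ∀ x ∈ Vz ∩ L0, ∃ e ∈ Vz ∩ L0 ∩ Linf,
      x - e ∈ Vz ∩ {m | ∃ l ∈ L0, m = vv • l})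
    (hinj : ∀ e ∈ Vz ∩ L0 ∩ Linf, e ∈ {m | ∃ l ∈ L0, m = vv • l} → e = 0) :
    -- conclusions: a common basis S realizing all the base-change isomorphisms
    (∃ S : Set V, LinearIndependent KK (fun x : S => (x : V)) ∧
      Vz ∩ L0 ∩ Linf = rspan Tset S ∧
      Vz ∩ L0 = rspan Rv S ∧
      Vz ∩ Linf = rspan Rvinv S ∧
      Vz = rspan Rlaurent S) ∧
    -- and E → (V_ℤ ∩ L_∞)/(V_ℤ ∩ v^{-1}L_∞) is an isomorphism
    (∀ x ∈ Vz ∩ Linf, ∃ e ∈ Vz ∩ L0 ∩ Linf,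
      x - e ∈ Vz ∩ {m | ∃ l ∈ Linf, m = vv⁻¹ • l}) ∧
    (∀ e ∈ Vz ∩ L0 ∩ Linf, e ∈ {m | ∃ l ∈ Linf, m = vv⁻¹ • l} → e = 0) := by
  classical
  obtain ⟨Sz, hSzind, hSzspan, rfl⟩ := hVz
  obtain ⟨S0, hS0ind, hS0span, rfl⟩ := hL0
  obtain ⟨Si, hSiind, hSispan, rfl⟩ := hLinf
  set VzS := rspan Rlaurent (Sz : Set V) with hVzSdef
  set L0S := rspan Aset (S0 : Set V) with hL0Sdef
  set LiS := rspan Abarset (Si : Set V) with hLiSdef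
  -- smul stability of lattices
  have hVz_s : ∀ c ∈ Rlaurent, ∀ x ∈ VzS, c • x ∈ VzS :=
    fun c hc => Triang.rspan_smul c (fun r hr => Triang.mul_mem_Rl hc hr)
  have hL0_s : ∀ c ∈ Aset, ∀ x ∈ L0S, c • x ∈ L0S :=
    fun c hc => Triang.rspan_smul c (fun r hr => Triang.mul_mem_A hc hr)
  have hLi_s : ∀ c ∈ Abarset, ∀ x ∈ LiS, c • x ∈ LiS :=
    fun c hc => Triang.rspan_smul c (fun r hr => Triang.mul_mem_Ab hc hr)
  -- E basic closure properties
  have hE0 : (0:V) ∈ VzS ∩ L0S ∩ LiS :=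
    ⟨⟨Triang.rspan_zero _ _, Triang.rspan_zero _ _⟩, Triang.rspan_zero _ _⟩
  have hEadd : ∀ a ∈ VzS ∩ L0S ∩ LiS, ∀ b ∈ VzS ∩ L0S ∩ LiS, a + b ∈ VzS ∩ L0S ∩ LiS :=
    fun a ha b hb => ⟨⟨Triang.rspan_add ha.1.1 hb.1.1, Triang.rspan_add ha.1.2 hb.1.2⟩,
      Triang.rspan_add ha.2 hb.2⟩
  have hEneg : ∀ a ∈ VzS ∩ L0S ∩ LiS, -a ∈ VzS ∩ L0S ∩ LiS :=
    fun a ha => ⟨⟨Triang.rspan_neg ha.1.1, Triang.rspan_neg ha.1.2⟩, Triang.rspan_neg ha.2⟩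
  have hEsub : ∀ a ∈ VzS ∩ L0S ∩ LiS, ∀ b ∈ VzS ∩ L0S ∩ LiS, a - b ∈ VzS ∩ L0S ∩ LiS :=
    fun a ha b hb => ⟨⟨Triang.rspan_sub ha.1.1 hb.1.1, Triang.rspan_sub ha.1.2 hb.1.2⟩,
      Triang.rspan_sub ha.2 hb.2⟩
  have hEsum : ∀ (s : Finset ↥(Sz : Set V)) (f : ↥(Sz : Set V) → V),
      (∀ i ∈ s, f i ∈ VzS ∩ L0S ∩ LiS) → (∑ i ∈ s, f i) ∈ VzS ∩ L0S ∩ LiS :=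
    fun s f h => ⟨⟨Triang.rspan_sum s f (fun i hi => (h i hi).1.1),
      Triang.rspan_sum s f (fun i hi => (h i hi).1.2)⟩,
      Triang.rspan_sum s f (fun i hi => (h i hi).2)⟩
  have hE_s : ∀ c ∈ Tset, ∀ x ∈ VzS ∩ L0S ∩ LiS, c • x ∈ VzS ∩ L0S ∩ LiS :=
    fun c hc x hx => ⟨⟨hVz_s c (Triang.T_sub_Rl hc) x hx.1.1,
      hL0_s c (Triang.T_sub_A hc) x hx.1.2⟩, hLi_s c (Triang.T_sub_Ab hc) x hx.2⟩
  -- bases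
  haveI : Fintype ↥(Sz : Set V) := Sz.finite_toSet.fintype
  haveI : Fintype ↥(S0 : Set V) := S0.finite_toSet.fintype
  haveI : Fintype ↥(Si : Set V) := Si.finite_toSet.fintype
  obtain ⟨bz, hbz⟩ : ∃ b : Module.Basis ↥(Sz : Set V) KK V, ∀ i : ↥(Sz : Set V), b i = (i : V) :=
    ⟨Module.Basis.mk hSzind (by rw [Subtype.range_coe]; exact hSzspan.ge),
     fun i => Module.Basis.mk_apply _ _ i⟩
  obtain ⟨b0, hb0⟩ : ∃ b : Module.Basis ↥(S0 : Set V) KK V, ∀ i : ↥(S0 : Set V), b i = (i : V) :=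
    ⟨Module.Basis.mk hS0ind (by rw [Subtype.range_coe]; exact hS0span.ge),
     fun i => Module.Basis.mk_apply _ _ i⟩
  obtain ⟨bi, hbi⟩ : ∃ b : Module.Basis ↥(Si : Set V) KK V, ∀ i : ↥(Si : Set V), b i = (i : V) :=
    ⟨Module.Basis.mk hSiind (by rw [Subtype.range_coe]; exact hSispan.ge),
     fun i => Module.Basis.mk_apply _ _ i⟩
  -- commensurability
  have C1 : ∀ x : V, ∃ k : ℕ, vv ^ k • x ∈ L0S := by
    intro x
    choose k hk using fun j : ↥(S0 : Set V) => Triang.K1 (b0.repr x j)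
    refine ⟨Finset.univ.sup k, ?_⟩
    have hx : vv ^ (Finset.univ.sup k) • x
        = ∑ j : ↥(S0 : Set V), (vv ^ (Finset.univ.sup k) * b0.repr x j) • (j : V) := by
      conv_lhs => rw [← b0.sum_repr x]
      rw [Finset.smul_sum]
      refine Finset.sum_congr rfl fun j _ => ?_
      rw [smul_smul, hb0 j]
    rw [hx]
    refine Triang.rspan_sum _ _ fun j _ => ?_
    have hkj : k j ≤ Finset.univ.sup k := Finset.le_sup (Finset.mem_univ j)
    have hcoef : vv ^ (Finset.univ.sup k) * b0.repr x j ∈ Aset := by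
      have hsplit : vv ^ (Finset.univ.sup k)
          = vv ^ (Finset.univ.sup k - k j) * vv ^ (k j) := by
        rw [← pow_add]; congr 1; omega
      rw [hsplit, mul_assoc]
      exact Triang.mul_mem_A (Triang.pow_mem_A _) (hk j)
    exact Triang.rspan_gen hcoef j.2
  have C2 : ∀ x : V, ∃ k : ℕ, (vv⁻¹) ^ k • x ∈ LiS := by
    intro x
    choose k hk using fun j : ↥(Si : Set V) => Triang.K2 (bi.repr x j)
    refine ⟨Finset.univ.sup k, ?_⟩
    have hx : (vv⁻¹) ^ (Finset.univ.sup k) • x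
        = ∑ j : ↥(Si : Set V), ((vv⁻¹) ^ (Finset.univ.sup k) * bi.repr x j) • (j : V) := by
      conv_lhs => rw [← bi.sum_repr x]
      rw [Finset.smul_sum]
      refine Finset.sum_congr rfl fun j _ => ?_
      rw [smul_smul, hbi j]
    rw [hx]
    refine Triang.rspan_sum _ _ fun j _ => ?_
    have hkj : k j ≤ Finset.univ.sup k := Finset.le_sup (Finset.mem_univ j)
    have hcoef : (vv⁻¹) ^ (Finset.univ.sup k) * bi.repr x j ∈ Abarset := by
      have hsplit : (vv⁻¹) ^ (Finset.univ.sup k)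
          = (vv⁻¹) ^ (Finset.univ.sup k - k j) * (vv⁻¹) ^ (k j) := by
        rw [← pow_add]; congr 1; omega
      rw [hsplit, mul_assoc]
      exact Triang.mul_mem_Ab (Triang.powinv_mem_Ab _) (hk j)
    exact Triang.rspan_gen hcoef j.2
  -- iterated expansion on the 0 side
  have EXP : ∀ n : ℕ, ∀ x, x ∈ VzS → x ∈ L0S → ∃ e : ℕ → V,
      (∀ i, e i ∈ VzS ∩ L0S ∩ LiS) ∧ ∃ y, y ∈ VzS ∧ y ∈ L0S ∧
      x = (∑ i ∈ Finset.range n, vv ^ i • e i) + vv ^ n • y := by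
    intro n
    induction n with
    | zero =>
      intro x hxV hxL
      exact ⟨fun _ => 0, fun _ => hE0, x, hxV, hxL, by simp⟩
    | succ n ih =>
      intro x hxV hxL
      obtain ⟨e, he, y, hyV, hyL, hxeq⟩ := ih x hxV hxL
      obtain ⟨e', he', hremV, l, hlL0, hyel⟩ := hsurj y ⟨hyV, hyL⟩
      have hlV : l ∈ VzS := by
        have h1 : vv⁻¹ • (y - e') ∈ VzS := hVz_s vv⁻¹ Triang.vvinv_mem_Rl _ hremV
        rwa [hyel, smul_smul, inv_mul_cancel₀ Triang.vv_ne_zero, one_smul] at h1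
      refine ⟨fun i => if i = n then e' else e i, ?_, l, hlV, hlL0, ?_⟩
      · intro i
        dsimp only
        by_cases h : i = n
        · rw [if_pos h]; exact he'
        · rw [if_neg h]; exact he i
      · dsimp only
        rw [Finset.sum_range_succ]
        have hsame : (∑ i ∈ Finset.range n, vv ^ i • (if i = n then e' else e i))
            = ∑ i ∈ Finset.range n, vv ^ i • e i :=
          Finset.sum_congr rfl fun i hi => by
            rw [if_neg (Nat.ne_of_lt (Finset.mem_range.mp hi))]
        rw [hsame, if_pos rfl]
        have hyeq : y = vv • l + e' := sub_eq_iff_eq_add.mp hyel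
        rw [hxeq, hyeq, smul_add, smul_smul, ← pow_succ]
        abel
  -- ∞-side normal form
  have KEY0 : ∀ y, y ∈ VzS → y ∈ LiS → ∃ (k : ℕ) (e : ℕ → V) (y' : V), 1 ≤ k ∧
      (∀ i, e i ∈ VzS ∩ L0S ∩ LiS) ∧ y' ∈ VzS ∩ L0S ∩ LiS ∧
      y = (∑ i ∈ Finset.range k, ((vv⁻¹) ^ (k - i)) • e i) + y' := by
    intro y hyV hyLi
    obtain ⟨k₀, hk₀⟩ := C1 y
    have hkL : vv ^ (k₀ + 1) • y ∈ L0S := by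
      have h : vv ^ (k₀ + 1) • y = vv • (vv ^ k₀ • y) := by
        rw [smul_smul, ← pow_succ']
      rw [h]; exact hL0_s vv Triang.vv_mem_A _ hk₀
    have hkV : vv ^ (k₀ + 1) • y ∈ VzS := hVz_s _ (Triang.pow_mem_Rl _) _ hyV
    obtain ⟨e, he, y₂, hy₂V, hy₂L, heq⟩ := EXP (k₀ + 1) _ hkV hkL
    set k := k₀ + 1
    have h1 : (vv⁻¹) ^ k • (vv ^ k • y) = y := by
      rw [smul_smul, Triang.cancel0, one_smul]
    have hyeq : y = (∑ i ∈ Finset.range k, ((vv⁻¹) ^ (k - i)) • e i) + y₂ := by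
      calc y = (vv⁻¹) ^ k • (vv ^ k • y) := h1.symm
        _ = (vv⁻¹) ^ k • ((∑ i ∈ Finset.range k, vv ^ i • e i) + vv ^ k • y₂) := by rw [heq]
        _ = (∑ i ∈ Finset.range k, ((vv⁻¹) ^ (k - i)) • e i) + y₂ := by
            rw [smul_add, Finset.smul_sum, smul_smul, Triang.cancel0, one_smul]
            congr 1
            refine Finset.sum_congr rfl fun i hi => ?_
            rw [smul_smul, Triang.cancel1 (le_of_lt (Finset.mem_range.mp hi))]
    have hy₂Li : y₂ ∈ LiS := by
      have h2 : y₂ = y - ∑ i ∈ Finset.range k, ((vv⁻¹) ^ (k - i)) • e i := by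
        rw [hyeq]; abel
      rw [h2]
      refine Triang.rspan_sub hyLi (Triang.rspan_sum _ _ fun i _ => ?_)
      exact hLi_s _ (Triang.powinv_mem_Ab _) _ (he i).2
    exact ⟨k, e, y₂, Nat.le_add_left 1 k₀, he, ⟨⟨hy₂V, hy₂L⟩, hy₂Li⟩, hyeq⟩
  -- surjectivity on the ∞ side
  have B2S : ∀ x ∈ VzS ∩ LiS, ∃ e ∈ VzS ∩ L0S ∩ LiS,
      x - e ∈ VzS ∩ {m | ∃ l ∈ LiS, m = vv⁻¹ • l} := by
    rintro y ⟨hyV, hyLi⟩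
    obtain ⟨k, e, y', hk1, he, hy', hyeq⟩ := KEY0 y hyV hyLi
    have hdiff : y - y' = ∑ i ∈ Finset.range k, ((vv⁻¹) ^ (k - i)) • e i := by
      rw [hyeq]; abel
    refine ⟨y', hy', ?_, ?_⟩
    · rw [hdiff]
      exact Triang.rspan_sum _ _ fun i _ => hVz_s _ (Triang.powinv_mem_Rl _) _ ((he i).1.1)
    · refine ⟨∑ i ∈ Finset.range k, ((vv⁻¹) ^ (k - i - 1)) • e i, ?_, ?_⟩
      · exact Triang.rspan_sum _ _ fun i _ => hLi_s _ (Triang.powinv_mem_Ab _) _ ((he i).2)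
      · rw [hdiff, Finset.smul_sum]
        refine Finset.sum_congr rfl fun i hi => ?_
        rw [smul_smul, ← pow_succ']
        congr 2
        have := Finset.mem_range.mp hi
        omega
  -- injectivity on the ∞ side
  have B2I : ∀ e ∈ VzS ∩ L0S ∩ LiS, e ∈ {m | ∃ l ∈ LiS, m = vv⁻¹ • l} → e = 0 := by
    rintro e heE ⟨l, hlLi, hel⟩
    have hve : vv • e = l := by
      rw [hel, smul_smul, mul_inv_cancel₀ Triang.vv_ne_zero, one_smul]
    have hveE : vv • e ∈ VzS ∩ L0S ∩ LiS :=
      ⟨⟨hVz_s _ Triang.vv_mem_Rl _ heE.1.1, hL0_s _ Triang.vv_mem_A _ heE.1.2⟩,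
        by rw [hve]; exact hlLi⟩
    have h0 := hinj _ hveE ⟨e, heE.1.2, rfl⟩
    rcases smul_eq_zero.mp h0 with h | h
    · exact absurd h Triang.vv_ne_zero
    · exact h
  -- iterated expansion on the ∞ side
  have EXP' : ∀ n : ℕ, ∀ x, x ∈ VzS → x ∈ LiS → ∃ e : ℕ → V,
      (∀ i, e i ∈ VzS ∩ L0S ∩ LiS) ∧ ∃ y, y ∈ VzS ∧ y ∈ LiS ∧
      x = (∑ i ∈ Finset.range n, (vv⁻¹) ^ i • e i) + (vv⁻¹) ^ n • y := by
    intro n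
    induction n with
    | zero =>
      intro x hxV hxL
      exact ⟨fun _ => 0, fun _ => hE0, x, hxV, hxL, by simp⟩
    | succ n ih =>
      intro x hxV hxL
      obtain ⟨e, he, y, hyV, hyL, hxeq⟩ := ih x hxV hxL
      obtain ⟨e', he', hremV, l, hlLi, hyel⟩ := B2S y ⟨hyV, hyL⟩
      have hlV : l ∈ VzS := by
        have h1 : vv • (y - e') ∈ VzS := hVz_s vv Triang.vv_mem_Rl _ hremV
        rwa [hyel, smul_smul, mul_inv_cancel₀ Triang.vv_ne_zero, one_smul] at h1
      refine ⟨fun i => if i = n then e' else e i, ?_, l, hlV, hlLi, ?_⟩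
      · intro i
        dsimp only
        by_cases h : i = n
        · rw [if_pos h]; exact he'
        · rw [if_neg h]; exact he i
      · dsimp only
        rw [Finset.sum_range_succ]
        have hsame : (∑ i ∈ Finset.range n, (vv⁻¹) ^ i • (if i = n then e' else e i))
            = ∑ i ∈ Finset.range n, (vv⁻¹) ^ i • e i :=
          Finset.sum_congr rfl fun i hi => by
            rw [if_neg (Nat.ne_of_lt (Finset.mem_range.mp hi))]
        rw [hsame, if_pos rfl]
        have hyeq : y = vv⁻¹ • l + e' := sub_eq_iff_eq_add.mp hyel
        rw [hxeq, hyeq, smul_add, smul_smul, ← pow_succ]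
        abel
  -- 0-side normal form
  have KEY1 : ∀ x, x ∈ VzS → x ∈ L0S → ∃ (k : ℕ) (e : ℕ → V) (y' : V), 1 ≤ k ∧
      (∀ i, e i ∈ VzS ∩ L0S ∩ LiS) ∧ y' ∈ VzS ∩ L0S ∩ LiS ∧
      x = (∑ i ∈ Finset.range k, (vv ^ (k - i)) • e i) + y' := by
    intro x hxV hxL
    obtain ⟨k₀, hk₀⟩ := C2 x
    have hkL : (vv⁻¹) ^ (k₀ + 1) • x ∈ LiS := by
      have h : (vv⁻¹) ^ (k₀ + 1) • x = vv⁻¹ • ((vv⁻¹) ^ k₀ • x) := by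
        rw [smul_smul, ← pow_succ']
      rw [h]; exact hLi_s vv⁻¹ Triang.vvinv_mem_Ab _ hk₀
    have hkV : (vv⁻¹) ^ (k₀ + 1) • x ∈ VzS := hVz_s _ (Triang.powinv_mem_Rl _) _ hxV
    obtain ⟨e, he, y₂, hy₂V, hy₂Li, heq⟩ := EXP' (k₀ + 1) _ hkV hkL
    set k := k₀ + 1
    have h1 : vv ^ k • ((vv⁻¹) ^ k • x) = x := by
      rw [smul_smul, Triang.cancel0', one_smul]
    have hxeq : x = (∑ i ∈ Finset.range k, (vv ^ (k - i)) • e i) + y₂ := by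
      calc x = vv ^ k • ((vv⁻¹) ^ k • x) := h1.symm
        _ = vv ^ k • ((∑ i ∈ Finset.range k, (vv⁻¹) ^ i • e i) + (vv⁻¹) ^ k • y₂) := by rw [heq]
        _ = (∑ i ∈ Finset.range k, (vv ^ (k - i)) • e i) + y₂ := by
            rw [smul_add, Finset.smul_sum, smul_smul, Triang.cancel0', one_smul]
            congr 1
            refine Finset.sum_congr rfl fun i hi => ?_
            rw [smul_smul, Triang.cancel2 (le_of_lt (Finset.mem_range.mp hi))]
    have hy₂L : y₂ ∈ L0S := by
      have h2 : y₂ = x - ∑ i ∈ Finset.range k, (vv ^ (k - i)) • e i := by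
        rw [hxeq]; abel
      rw [h2]
      refine Triang.rspan_sub hxL (Triang.rspan_sum _ _ fun i _ => ?_)
      exact hL0_s _ (Triang.pow_mem_A _) _ (he i).1.2
    exact ⟨k, e, y₂, Nat.le_add_left 1 k₀, he, ⟨⟨hy₂V, hy₂L⟩, hy₂Li⟩, hxeq⟩
  -- span results with E
  have S0sub : ∀ x, x ∈ VzS → x ∈ L0S → x ∈ rspan Rv (VzS ∩ L0S ∩ LiS) := by
    intro x hxV hxL
    obtain ⟨k, e, y', _, he, hy', hxeq⟩ := KEY1 x hxV hxL
    rw [hxeq]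
    refine Triang.rspan_add (Triang.rspan_sum _ _ fun i _ => ?_) ?_
    · exact Triang.rspan_gen (Triang.pow_mem_Rv _) (he i)
    · have := Triang.rspan_gen (R := Rv) (S := VzS ∩ L0S ∩ LiS) Triang.one_mem_Rv hy'
      rwa [one_smul] at this
  have SiSub : ∀ y, y ∈ VzS → y ∈ LiS → y ∈ rspan Rvinv (VzS ∩ L0S ∩ LiS) := by
    intro y hyV hyLi
    obtain ⟨k, e, y', _, he, hy', hyeq⟩ := KEY0 y hyV hyLi
    rw [hyeq]
    refine Triang.rspan_add (Triang.rspan_sum _ _ fun i _ => ?_) ?_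
    · exact Triang.rspan_gen (Triang.powinv_mem_Rvinv _) (he i)
    · have := Triang.rspan_gen (R := Rvinv) (S := VzS ∩ L0S ∩ LiS) Triang.one_mem_Rvinv hy'
      rwa [one_smul] at this
  have SLam : ∀ x, x ∈ VzS → x ∈ rspan Rlaurent (VzS ∩ L0S ∩ LiS) := by
    intro x hxV
    obtain ⟨k, hk⟩ := C1 x
    have h1 : vv ^ k • x ∈ rspan Rv (VzS ∩ L0S ∩ LiS) :=
      S0sub _ (hVz_s _ (Triang.pow_mem_Rl _) _ hxV) hk
    have h2 : vv ^ k • x ∈ rspan Rlaurent (VzS ∩ L0S ∩ LiS) :=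
      Triang.rspan_mono_ring Triang.Rv_sub_Rl h1
    have h3 : (vv⁻¹) ^ k • (vv ^ k • x) ∈ rspan Rlaurent (VzS ∩ L0S ∩ LiS) :=
      Triang.rspan_smul _ (fun r hr => Triang.mul_mem_Rl (Triang.powinv_mem_Rl _) hr) _ h2
    rwa [smul_smul, Triang.cancel0, one_smul] at h3
  -- the key rigidity property of (v-1)•Vz
  have D2 : ∀ x, x ∈ VzS → (vv - 1) • x ∈ VzS ∩ L0S ∩ LiS → (vv - 1) • x = 0 := by
    intro x hxV hE
    have he' : vv • x = x + (vv - 1) • x := by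
      rw [sub_smul, one_smul]; abel
    have hdown : ∀ k, vv ^ k • x ∈ L0S → x ∈ L0S := by
      intro k
      induction k with
      | zero => intro h; simpa using h
      | succ k ih =>
        intro h
        apply ih
        have heq : vv ^ k • x = vv ^ (k+1) • x - vv ^ k • ((vv - 1) • x) := by
          calc vv ^ k • x = vv ^ k • (x + (vv - 1) • x) - vv ^ k • ((vv - 1) • x) := by
                rw [smul_add]; abel
            _ = vv ^ k • (vv • x) - vv ^ k • ((vv - 1) • x) := by rw [← he']
            _ = vv ^ (k+1) • x - vv ^ k • ((vv - 1) • x) := by rw [smul_smul, ← pow_succ]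
        rw [heq]
        exact Triang.rspan_sub h (hL0_s _ (Triang.pow_mem_A k) _ hE.1.2)
    obtain ⟨k₀, hk₀⟩ := C1 x
    have hxL : x ∈ L0S := hdown k₀ hk₀
    have hup : ∀ k, (vv⁻¹) ^ k • x ∈ LiS → x ∈ LiS := by
      intro k
      induction k with
      | zero => intro h; simpa using h
      | succ k ih =>
        intro h
        apply ih
        have heq : (vv⁻¹) ^ k • x = (vv⁻¹) ^ (k+1) • x + (vv⁻¹) ^ (k+1) • ((vv - 1) • x) := by
          rw [← smul_add, ← he', smul_smul]
          congr 1
          rw [pow_succ, mul_assoc, inv_mul_cancel₀ Triang.vv_ne_zero, mul_one]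
        rw [heq]
        exact Triang.rspan_add h (hLi_s _ (Triang.powinv_mem_Ab _) _ hE.2)
    obtain ⟨k₁, hk₁⟩ := C2 x
    have hxLi : x ∈ LiS := hup k₁ hk₁
    have hvxE : vv • x ∈ VzS ∩ L0S ∩ LiS := by
      rw [he']
      exact hEadd _ ⟨⟨hxV, hxL⟩, hxLi⟩ _ hE
    have h0 := hinj _ hvxE ⟨x, hxL, rfl⟩
    rcases smul_eq_zero.mp h0 with h | h
    · exact absurd h Triang.vv_ne_zero
    · rw [h, smul_zero]
  -- congruence modulo (v-1)·Vz
  have Dsub : ∀ z ∈ rspan {c | ∃ d ∈ Rlaurent, c = (vv - 1) * d} (VzS ∩ L0S ∩ LiS),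
      ∃ y ∈ VzS, z = (vv - 1) • y := by
    intro z hz
    refine Triang.rspan_induction (T := {z | ∃ y ∈ VzS, z = (vv - 1) • y}) ?_ ?_ ?_ ?_ hz
    · exact ⟨0, Triang.rspan_zero _ _, (smul_zero _).symm⟩
    · rintro a ⟨y1, hy1, rfl⟩ b ⟨y2, hy2, rfl⟩
      exact ⟨y1 + y2, Triang.rspan_add hy1 hy2, (smul_add _ _ _).symm⟩
    · rintro a ⟨y1, hy1, rfl⟩
      exact ⟨-y1, Triang.rspan_neg hy1, (smul_neg _ _).symm⟩
    · rintro c ⟨d, hd, rfl⟩ s hs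
      exact ⟨d • s, hVz_s d hd s hs.1.1, (smul_smul _ _ _).symm⟩
  have ED0 : ∀ z ∈ rspan {c | ∃ d ∈ Rlaurent, c = (vv - 1) * d} (VzS ∩ L0S ∩ LiS),
      z ∈ VzS ∩ L0S ∩ LiS → z = 0 := by
    intro z hz hzE
    obtain ⟨y, hy, rfl⟩ := Dsub z hz
    exact D2 y hy hzE
  -- approximation by elements of E modulo (v-1)·Vz
  have D1 : ∀ x ∈ rspan Rlaurent (VzS ∩ L0S ∩ LiS), ∃ f ∈ VzS ∩ L0S ∩ LiS,
      x - f ∈ rspan {c | ∃ d ∈ Rlaurent, c = (vv - 1) * d} (VzS ∩ L0S ∩ LiS) := by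
    intro x hx
    refine Triang.rspan_induction
      (T := {x | ∃ f ∈ VzS ∩ L0S ∩ LiS,
        x - f ∈ rspan {c | ∃ d ∈ Rlaurent, c = (vv - 1) * d} (VzS ∩ L0S ∩ LiS)})
      ?_ ?_ ?_ ?_ hx
    · exact ⟨0, hE0, by simpa using Triang.rspan_zero _ _⟩
    · rintro a ⟨f, hf, haf⟩ b ⟨g, hg, hbg⟩
      refine ⟨f + g, hEadd _ hf _ hg, ?_⟩
      have : a + b - (f + g) = (a - f) + (b - g) := by abel
      rw [this]
      exact Triang.rspan_add haf hbg
    · rintro a ⟨f, hf, haf⟩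
      refine ⟨-f, hEneg _ hf, ?_⟩
      have : -a - -f = -(a - f) := by abel
      rw [this]
      exact Triang.rspan_neg haf
    · rintro c hc s hs
      obtain ⟨γ, hγ, d, hd, hcd⟩ := Triang.Lam4 hc
      refine ⟨γ • s, hE_s γ hγ s hs, ?_⟩
      rw [← sub_smul, hcd]
      exact Triang.rspan_gen ⟨d, hd, rfl⟩ hs
  -- choose the candidate basis
  have hSzsubV : ∀ s ∈ (Sz : Set V), s ∈ VzS := Triang.subset_rspan Triang.one_mem_Rl
  choose F hF1 hF2 using fun j : ↥(Sz : Set V) => D1 (j : V) (SLam _ (hSzsubV _ j.2))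
  -- coordinates of Vz elements are Laurent
  have hrepr : ∀ x ∈ VzS, ∀ j, bz.repr x j ∈ Rlaurent := by
    intro x hx
    refine Triang.rspan_induction (T := {y | ∀ j, bz.repr y j ∈ Rlaurent}) ?_ ?_ ?_ ?_ hx
    · intro j
      rw [map_zero, Finsupp.coe_zero, Pi.zero_apply]
      exact Subalgebra.zero_mem _
    · intro a ha b hb j
      rw [map_add, Finsupp.add_apply]
      exact Subalgebra.add_mem _ (ha j) (hb j)
    · intro a ha j
      rw [map_neg, Finsupp.neg_apply]
      exact Subalgebra.neg_mem _ (ha j)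
    · intro c hc s hs j
      rw [map_smul, Finsupp.smul_apply, smul_eq_mul]
      have hsb : s = bz ⟨s, hs⟩ := (hbz ⟨s, hs⟩).symm
      rw [hsb, Module.Basis.repr_self, Finsupp.single_apply]
      split
      · rw [mul_one]; exact hc
      · rw [mul_zero]; exact Subalgebra.zero_mem _
  -- every element of E is a Tset-combination of the F j
  have GenE : ∀ e ∈ VzS ∩ L0S ∩ LiS, ∃ γ : ↥(Sz : Set V) → KK,
      (∀ j, γ j ∈ Tset) ∧ e = ∑ j : ↥(Sz : Set V), γ j • F j := by
    intro e he
    have heV : e ∈ VzS := he.1.1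
    choose γ hγT d hd hδ using fun j : ↥(Sz : Set V) => Triang.Lam4 (hrepr e heV j)
    refine ⟨γ, hγT, ?_⟩
    have hesum : e = ∑ j : ↥(Sz : Set V), (bz.repr e j) • (j : V) := by
      conv_lhs => rw [← bz.sum_repr e]
      refine Finset.sum_congr rfl fun j _ => ?_
      rw [hbz j]
    have hdiff : e - (∑ j : ↥(Sz : Set V), γ j • F j)
        ∈ rspan {c | ∃ d ∈ Rlaurent, c = (vv - 1) * d} (VzS ∩ L0S ∩ LiS) := by
      have hsplit : e - (∑ j : ↥(Sz : Set V), γ j • F j)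
          = ∑ j : ↥(Sz : Set V),
            ((bz.repr e j - γ j) • (j : V) + γ j • ((j : V) - F j)) := by
        conv_lhs => rw [hesum]
        rw [← Finset.sum_sub_distrib]
        refine Finset.sum_congr rfl fun j _ => ?_
        rw [sub_smul, smul_sub]
        abel
      rw [hsplit]
      refine Triang.rspan_sum _ _ fun j _ => Triang.rspan_add ?_ ?_
      · rw [hδ j]
        exact Triang.rspan_smul (R' := {c | ∃ d ∈ Rlaurent, c = (vv - 1) * d}) _
          (fun r hr => ⟨d j * r, Triang.mul_mem_Rl (hd j) hr, by ring⟩)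
          _ (SLam _ (hSzsubV _ j.2))
      · refine Triang.rspan_smul (R' := {c | ∃ d ∈ Rlaurent, c = (vv - 1) * d}) _ ?_ _ (hF2 j)
        rintro r ⟨d', hd', rfl⟩
        exact ⟨γ j * d', Triang.mul_mem_Rl (Triang.T_sub_Rl (hγT j)) hd', by ring⟩
    have hwE : (∑ j : ↥(Sz : Set V), γ j • F j) ∈ VzS ∩ L0S ∩ LiS :=
      hEsum _ _ fun j _ => hE_s _ (hγT j) _ (hF1 j)
    have h0 := ED0 _ hdiff (hEsub _ he _ hwE)
    exact sub_eq_zero.mp h0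
  -- spanning over KK
  have hVz_span : ∀ x ∈ VzS, x ∈ Submodule.span KK (Set.range F) := by
    intro x hx
    have hx' := SLam x hx
    refine Triang.rspan_induction
      (T := {y | y ∈ (Submodule.span KK (Set.range F) : Set V)}) ?_ ?_ ?_ ?_ hx'
    · exact Submodule.zero_mem _
    · intro a ha b hb; exact Submodule.add_mem _ ha hb
    · intro a ha; exact Submodule.neg_mem _ ha
    · intro c hc s hs
      obtain ⟨γ, hγT, rfl⟩ := GenE s hs
      exact Submodule.smul_mem _ _ (Submodule.sum_mem _ fun j _ =>
        Submodule.smul_mem _ _ (Submodule.subset_span ⟨j, rfl⟩))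
  have htop : ⊤ ≤ Submodule.span KK (Set.range F) := by
    rw [← hSzspan]
    exact Submodule.span_le.mpr fun s hs => hVz_span s (hSzsubV s hs)
  have hcard : Fintype.card ↥(Sz : Set V) = Module.finrank KK V :=
    (Module.finrank_eq_card_basis bz).symm
  have hFind : LinearIndependent KK F :=
    linearIndependent_of_top_le_span_of_card_eq_finrank htop hcard
  -- transport from E-spans to (range F)-spans
  have EtoS : ∀ (Rset : Set KK), (∀ c ∈ Rset, ∀ γ ∈ Tset, c * γ ∈ Rset) →
      ∀ x ∈ rspan Rset (VzS ∩ L0S ∩ LiS), x ∈ rspan Rset (Set.range F) := by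
    intro Rset hmul x hx
    refine Triang.rspan_induction (T := rspan Rset (Set.range F))
      (Triang.rspan_zero _ _) (fun a ha b hb => Triang.rspan_add ha hb)
      (fun a ha => Triang.rspan_neg ha) ?_ hx
    intro c hc s hs
    obtain ⟨γ, hγT, rfl⟩ := GenE s hs
    rw [Finset.smul_sum]
    refine Triang.rspan_sum _ _ fun j _ => ?_
    rw [smul_smul]
    exact Triang.rspan_gen (hmul c hc _ (hγT j)) ⟨j, rfl⟩
  -- final equalities
  have E_eq : VzS ∩ L0S ∩ LiS = rspan Tset (Set.range F) := by
    apply Set.eq_of_subset_of_subset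
    · intro x hx
      obtain ⟨γ, hγT, rfl⟩ := GenE x hx
      exact Triang.rspan_sum _ _ fun j _ => Triang.rspan_gen (hγT j) ⟨j, rfl⟩
    · refine Triang.rspan_induction hE0 hEadd hEneg ?_
      rintro c hc s ⟨j, rfl⟩
      exact hE_s c hc _ (hF1 j)
  have M_eq : VzS ∩ L0S = rspan Rv (Set.range F) := by
    apply Set.eq_of_subset_of_subset
    · rintro x ⟨hxV, hxL⟩
      exact EtoS Rv (fun c hc γ hγ => Triang.mul_mem_Rv hc (Triang.T_sub_Rv hγ)) _
        (S0sub x hxV hxL)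
    · refine Triang.rspan_induction ⟨Triang.rspan_zero _ _, Triang.rspan_zero _ _⟩
        (fun a ha b hb => ⟨Triang.rspan_add ha.1 hb.1, Triang.rspan_add ha.2 hb.2⟩)
        (fun a ha => ⟨Triang.rspan_neg ha.1, Triang.rspan_neg ha.2⟩) ?_
      rintro c hc s ⟨j, rfl⟩
      exact ⟨hVz_s c (Triang.Rv_sub_Rl hc) _ (hF1 j).1.1,
        hL0_s c (Triang.Rv_sub_A hc) _ (hF1 j).1.2⟩
  have Li_eq : VzS ∩ LiS = rspan Rvinv (Set.range F) := by
    apply Set.eq_of_subset_of_subset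
    · rintro x ⟨hxV, hxLi⟩
      exact EtoS Rvinv (fun c hc γ hγ => Triang.mul_mem_Rvinv hc (Triang.T_sub_Rvinv hγ)) _
        (SiSub x hxV hxLi)
    · refine Triang.rspan_induction ⟨Triang.rspan_zero _ _, Triang.rspan_zero _ _⟩
        (fun a ha b hb => ⟨Triang.rspan_add ha.1 hb.1, Triang.rspan_add ha.2 hb.2⟩)
        (fun a ha => ⟨Triang.rspan_neg ha.1, Triang.rspan_neg ha.2⟩) ?_
      rintro c hc s ⟨j, rfl⟩
      exact ⟨hVz_s c (Triang.Rvinv_sub_Rl hc) _ (hF1 j).1.1,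
        hLi_s c (Triang.Rvinv_sub_Ab hc) _ (hF1 j).2⟩
  have Vz_eq : VzS = rspan Rlaurent (Set.range F) := by
    apply Set.eq_of_subset_of_subset
    · intro x hx
      exact EtoS Rlaurent (fun c hc γ hγ => Triang.mul_mem_Rl hc (Triang.T_sub_Rl hγ)) _
        (SLam x hx)
    · refine Triang.rspan_induction (Triang.rspan_zero _ _)
        (fun a ha b hb => Triang.rspan_add ha hb)
        (fun a ha => Triang.rspan_neg ha) ?_
      rintro c hc s ⟨j, rfl⟩
      exact hVz_s c hc _ (hF1 j).1.1
  exact ⟨⟨Set.range F, (linearIndepOn_id_range_iff hFind.injective).mpr hFind, E_eq, M_eq, Li_eq, Vz_eq⟩, B2S, B2I⟩
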